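/- arXiv:2103.08292 — 3 statements merged into one kernel-verified Lean document; each statement's English description precedes it below -/
import Mathlib

section
/- Let m ≥ 1, B ∈ ℝ^{m×m} be positive semidefinite, C ∈ ℝ^{m×3}, and X ∈ ℝ^{m×3}. If the block matrix [[I₃, Xᵀ], [X, B]] ∈ ℝ^{(m+3)×(m+3)} is positive semidefinite, then tr(Cᵀ X) ≤ tr((Cᵀ B C)^{1/2}), where (Cᵀ B C)^{1/2} is the unique positive semidefinite square root of the positive semidefinite 3×3 matrix Cᵀ B C. -/
open Matrix

attribute [local instance] Classical.propDecidable

variable {ι : Type*} [Fintype ι] [DecidableEq ι]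

/-- The unique positive semidefinite square root of a positive semidefinite real matrix
(junk value `0` if the matrix is not positive semidefinite). -/
noncomputable def psqrt (M : Matrix ι ι ℝ) : Matrix ι ι ℝ :=
  if h : ∃ N : Matrix ι ι ℝ, N.PosSemidef ∧ N * N = M then h.choose else 0

section SqrtPort
open scoped MatrixOrder

noncomputable def Matrix.PosSemidef.sqrt {n : Type*} [Fintype n] [DecidableEq n]
    {A : Matrix n n ℝ} (hA : A.PosSemidef) : Matrix n n ℝ :=
  (hA.1.eigenvectorUnitary : Matrix n n ℝ) * diagonal (RCLike.ofReal ∘ Real.sqrt ∘ hA.1.eigenvalues)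
    * star (hA.1.eigenvectorUnitary : Matrix n n ℝ)

lemma Matrix.PosSemidef.sqrt_eq_cfcSqrt {n : Type*} [Fintype n] [DecidableEq n]
    {A : Matrix n n ℝ} (hA : A.PosSemidef) : hA.sqrt = CFC.sqrt A := by
  rw [CFC.sqrt_eq_real_sqrt A (Matrix.nonneg_iff_posSemidef.mpr hA), cfcₙ_eq_cfc (hf0 := by simp),
    hA.1.cfc_eq, IsHermitian.cfc, Unitary.conjStarAlgAut_apply]
  rfl

lemma Matrix.PosSemidef.posSemidef_sqrt {n : Type*} [Fintype n] [DecidableEq n]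
    {A : Matrix n n ℝ} (hA : A.PosSemidef) : hA.sqrt.PosSemidef := by
  rw [hA.sqrt_eq_cfcSqrt]
  exact Matrix.nonneg_iff_posSemidef.mp (CFC.sqrt_nonneg A)

lemma Matrix.PosSemidef.sqrt_mul_self {n : Type*} [Fintype n] [DecidableEq n]
    {A : Matrix n n ℝ} (hA : A.PosSemidef) : hA.sqrt * hA.sqrt = A := by
  rw [hA.sqrt_eq_cfcSqrt]
  exact CFC.sqrt_mul_sqrt_self A (Matrix.nonneg_iff_posSemidef.mpr hA)

lemma Matrix.PosSemidef.eq_sqrt_of_sq_eq {n : Type*} [Fintype n] [DecidableEq n]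
    {B A : Matrix n n ℝ} (hB : B.PosSemidef) (hA : A.PosSemidef) (h : B ^ 2 = A) :
    B = hA.sqrt := by
  rw [hA.sqrt_eq_cfcSqrt]
  exact (CFC.sqrt_unique (by rw [← pow_two]; exact h) (Matrix.nonneg_iff_posSemidef.mpr hB)).symm

end SqrtPort

lemma psqrt_eq {M : Matrix ι ι ℝ} (hM : M.PosSemidef) : psqrt M = hM.sqrt := by
  have hex : ∃ N : Matrix ι ι ℝ, N.PosSemidef ∧ N * N = M :=
    ⟨hM.sqrt, hM.posSemidef_sqrt, hM.sqrt_mul_self⟩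
  rw [psqrt, dif_pos hex]
  exact hex.choose_spec.1.eq_sqrt_of_sq_eq hM (by rw [pow_two, hex.choose_spec.2])

lemma psd_diag_nonneg {n : Type*} [Fintype n] {P : Matrix n n ℝ} (hP : P.PosSemidef)
    (i : n) : 0 ≤ P i i := by
  have := hP.dotProduct_mulVec_nonneg (Pi.single i 1)
  simpa [dotProduct, mulVec, Pi.single_apply, Finset.sum_ite_eq] using this

lemma key_aux {n : Type*} [Fintype n] [DecidableEq n]
    {A : Matrix n n ℝ} (hA : A.PosSemidef) (N : Matrix n n ℝ)
    (h : (A - Nᵀ * N).PosSemidef) : N.trace ≤ hA.sqrt.trace := by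
  have hU1 : star (hA.1.eigenvectorUnitary : Matrix n n ℝ) * (hA.1.eigenvectorUnitary : Matrix n n ℝ) = 1 :=
    (mem_unitaryGroup_iff').mp hA.1.eigenvectorUnitary.2
  have hU2 : (hA.1.eigenvectorUnitary : Matrix n n ℝ) * star (hA.1.eigenvectorUnitary : Matrix n n ℝ) = 1 :=
    (mem_unitaryGroup_iff).mp hA.1.eigenvectorUnitary.2
  set U : Matrix n n ℝ := (hA.1.eigenvectorUnitary : Matrix n n ℝ) with hUdef
  have hUZ : ∀ Z : Matrix n n ℝ, U * (star U * Z) = Z := fun Z => by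
    rw [← mul_assoc, hU2, one_mul]
  set G : Matrix n n ℝ := star U * N * U with hGdef
  have hG : N.trace = G.trace := by
    rw [hGdef, mul_assoc, trace_mul_comm, mul_assoc, hU2, mul_one]
  have hcoe : (RCLike.ofReal ∘ hA.1.eigenvalues : n → ℝ) = hA.1.eigenvalues := rfl
  have hdiagA : star U * A * U = diagonal (hA.1.eigenvalues) := by
    conv_lhs => rw [hA.1.spectral_theorem, Unitary.conjStarAlgAut_apply]
    rw [hcoe, mul_assoc, mul_assoc, hU1, mul_one, ← mul_assoc, hU1, one_mul]
  have hsqrt : hA.sqrt.trace = ∑ i, Real.sqrt (hA.1.eigenvalues i) := by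
    rw [Matrix.PosSemidef.sqrt, ← hUdef, mul_assoc, trace_mul_comm, mul_assoc, hU1, mul_one]
    rw [show (RCLike.ofReal ∘ Real.sqrt ∘ hA.1.eigenvalues : n → ℝ)
        = fun i => Real.sqrt (hA.1.eigenvalues i) from rfl, trace_diagonal]
  have hNt : Nᵀ = star N := (conjTranspose_eq_transpose_of_trivial N).symm
  have hpsd : (star U * (A - Nᵀ * N) * U).PosSemidef := by
    have := h.conjTranspose_mul_mul_same U
    simpa [Matrix.star_eq_conjTranspose] using this
  have hstarG : star G = star U * star N * U := by
    rw [hGdef]; simp only [Matrix.star_mul, star_star, Matrix.mul_assoc]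
  have hGG : star G * G = star U * (Nᵀ * N) * U := by
    rw [hstarG, hGdef, hNt]
    simp only [Matrix.mul_assoc]
    rw [hUZ]
  have hEntry : ∀ i, ∑ j, (G j i) ^ 2 ≤ hA.1.eigenvalues i := by
    intro i
    have h1 : 0 ≤ (star U * (A - Nᵀ * N) * U) i i := psd_diag_nonneg hpsd i
    have h2 : (star U * (A - Nᵀ * N) * U) i i
        = hA.1.eigenvalues i - (star G * G) i i := by
      rw [Matrix.mul_sub, Matrix.sub_mul, hGG, hdiagA, Matrix.sub_apply, diagonal_apply_eq]
    have h3 : (star G * G) i i = ∑ j, (G j i) ^ 2 := by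
      simp [Matrix.mul_apply, conjTranspose_apply, pow_two]
    rw [h2, h3] at h1
    linarith
  rw [hG, hsqrt, Matrix.trace]
  apply Finset.sum_le_sum
  intro i _
  have h1 : (G i i) ^ 2 ≤ ∑ j, (G j i) ^ 2 :=
    Finset.single_le_sum (f := fun j => (G j i) ^ 2) (fun j _ => sq_nonneg _) (Finset.mem_univ i)
  calc Matrix.diag G i = G i i := rfl
    _ ≤ |G i i| := le_abs_self _
    _ = Real.sqrt ((G i i) ^ 2) := (Real.sqrt_sq_eq_abs _).symm
    _ ≤ Real.sqrt (hA.1.eigenvalues i) := Real.sqrt_le_sqrt (le_trans h1 (hEntry i))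

/-- If `B ⪰ 0` and `[[I₃, Xᵀ],[X, B]] ⪰ 0`, then `tr(Cᵀ X) ≤ tr((Cᵀ B C)^{1/2})`. -/
theorem trace_le_trace_sqrt {m : ℕ} (hm : 1 ≤ m)
    (B : Matrix (Fin m) (Fin m) ℝ) (hB : B.PosSemidef)
    (C X : Matrix (Fin m) (Fin 3) ℝ)
    (hY : (fromBlocks (1 : Matrix (Fin 3) (Fin 3) ℝ) Xᵀ X B).PosSemidef) :
    (Cᵀ * X).trace ≤ (psqrt (Cᵀ * B * C)).trace := by
  have hA : (Cᵀ * B * C).PosSemidef := by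
    have := hB.conjTranspose_mul_mul_same C
    simpa [conjTranspose_eq_transpose_of_trivial] using this
  rw [psqrt_eq hA]
  have hXh : (Xᵀ)ᴴ = X := by
    rw [conjTranspose_eq_transpose_of_trivial, transpose_transpose]
  have hSchur : (B - X * Xᵀ).PosSemidef := by
    have h1 : (fromBlocks (1 : Matrix (Fin 3) (Fin 3) ℝ) Xᵀ (Xᵀ)ᴴ B).PosSemidef := by
      rwa [hXh]
    have : Invertible (1 : Matrix (Fin 3) (Fin 3) ℝ) := invertibleOne
    have := (Matrix.PosDef.fromBlocks₁₁ Xᵀ B Matrix.PosDef.one).mp h1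
    simpa [hXh] using this
  have hsub : (Cᵀ * B * C - (Xᵀ * C)ᵀ * (Xᵀ * C)).PosSemidef := by
    have h2 := hSchur.conjTranspose_mul_mul_same C
    have h3 : Cᴴ * (B - X * Xᵀ) * C = Cᵀ * B * C - (Xᵀ * C)ᵀ * (Xᵀ * C) := by
      rw [conjTranspose_eq_transpose_of_trivial]
      rw [Matrix.mul_sub, Matrix.sub_mul, transpose_mul, transpose_transpose]
      simp [Matrix.mul_assoc]
    rwa [h3] at h2
  have := key_aux hA (Xᵀ * C) hsub
  rwa [show (Xᵀ * C).trace = (Cᵀ * X).trace by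
    rw [← trace_transpose, transpose_mul, transpose_transpose]] at this
end

section
/- Let m ≥ 1, B ∈ ℝ^{m×m} be positive semidefinite, and C ∈ ℝ^{m×3}. Define X* = B C ((Cᵀ B C)^{1/2})^†, where (·)^{1/2} is the positive semidefinite square root and (·)^† the Moore–Penrose pseudoinverse. Then the block matrix [[I₃, X*ᵀ], [X*, B]] is positive semidefinite and tr(Cᵀ X*) = tr((Cᵀ B C)^{1/2}); consequently X* maximizes tr(Cᵀ X) over all X ∈ ℝ^{m×3} for which [[I₃, Xᵀ], [X, B]] is positive semidefinite. -/
open Matrix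

attribute [local instance] Classical.propDecidable

variable {ι : Type*} [Fintype ι] [DecidableEq ι]

/-- The Moore–Penrose pseudoinverse of a square real matrix, characterized by the four
Penrose conditions (junk value `0` if no such matrix exists). -/
noncomputable def pinv (M : Matrix ι ι ℝ) : Matrix ι ι ℝ :=
  if h : ∃ N : Matrix ι ι ℝ,
      M * N * M = M ∧ N * M * N = N ∧ (M * N)ᵀ = M * N ∧ (N * M)ᵀ = N * M then
    h.choose
  else 0

set_option linter.unusedSectionVars false
set_option linter.unusedVariables false

lemma ct_eq {α β : Type*} (A : Matrix α β ℝ) : Aᴴ = Aᵀ :=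
  conjTranspose_eq_transpose_of_trivial A

namespace Matrix.PosSemidef
open scoped MatrixOrder in
lemma exists_sqrt_aux {n : Type*} [Fintype n] [DecidableEq n] {A : Matrix n n ℝ} (hA : A.PosSemidef) :
    ∃ X : Matrix n n ℝ, X.PosSemidef ∧ X * X = A :=
  ⟨CFC.sqrt A, (CFC.sqrt_nonneg A).posSemidef, CFC.sqrt_mul_sqrt_self A hA.nonneg⟩
noncomputable def sqrt_s8 {n : Type*} [Fintype n] [DecidableEq n] {A : Matrix n n ℝ} (hA : A.PosSemidef) : Matrix n n ℝ :=
  hA.exists_sqrt_aux.choose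
lemma posSemidef_sqrt_s8 {n : Type*} [Fintype n] [DecidableEq n] {A : Matrix n n ℝ} (hA : A.PosSemidef) : hA.sqrt_s8.PosSemidef :=
  hA.exists_sqrt_aux.choose_spec.1
lemma sqrt_mul_self_s8 {n : Type*} [Fintype n] [DecidableEq n] {A : Matrix n n ℝ} (hA : A.PosSemidef) : hA.sqrt_s8 * hA.sqrt_s8 = A :=
  hA.exists_sqrt_aux.choose_spec.2
end Matrix.PosSemidef

lemma psqrt_spec {M : Matrix ι ι ℝ} (hM : M.PosSemidef) :
    (psqrt M).PosSemidef ∧ psqrt M * psqrt M = M := by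
  have h : ∃ N : Matrix ι ι ℝ, N.PosSemidef ∧ N * N = M :=
    ⟨hM.sqrt_s8, hM.posSemidef_sqrt_s8, hM.sqrt_mul_self_s8⟩
  rw [psqrt, dif_pos h]
  exact h.choose_spec

lemma exists_pinv {M : Matrix ι ι ℝ} (hM : M.IsHermitian) :
    ∃ N : Matrix ι ι ℝ,
      M * N * M = M ∧ N * M * N = N ∧ (M * N)ᵀ = M * N ∧ (N * M)ᵀ = N * M := by
  set U : Matrix ι ι ℝ := (hM.eigenvectorUnitary : Matrix ι ι ℝ) with hU
  have hU1 : star U * U = 1 := Matrix.mem_unitaryGroup_iff'.mp (hM.eigenvectorUnitary).2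
  set f : ι → ℝ := hM.eigenvalues with hf
  set g : ι → ℝ := fun i => if f i = 0 then 0 else (f i)⁻¹ with hg
  have hspec : M = U * diagonal f * star U := by
    have := hM.spectral_theorem
    rwa [RCLike.ofReal_real_eq_id, Function.id_comp] at this
  have key : ∀ a b : ι → ℝ, (U * diagonal a * star U) * (U * diagonal b * star U)
      = U * diagonal (fun i => a i * b i) * star U := by
    intro a b
    calc (U * diagonal a * star U) * (U * diagonal b * star U)
        = U * diagonal a * (star U * U) * diagonal b * star U := by
          simp only [mul_assoc]
      _ = U * (diagonal a * diagonal b) * star U := by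
          rw [hU1]; simp only [mul_one, mul_assoc]
      _ = U * diagonal (fun i => a i * b i) * star U := by
          rw [diagonal_mul_diagonal]
  have hsym : ∀ a : ι → ℝ, (U * diagonal a * star U)ᵀ = U * diagonal a * star U := by
    intro a
    have hstar : star U = Uᵀ := by rw [Matrix.star_eq_conjTranspose, ct_eq]
    rw [hstar, transpose_mul, transpose_mul, transpose_transpose, diagonal_transpose, mul_assoc]
  have hfun : ∀ (F G : ι → ℝ), F = G → U * diagonal F * star U = U * diagonal G * star U :=
    fun F G h => by rw [h]
  refine ⟨U * diagonal g * star U, ?_, ?_, ?_, ?_⟩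
  · rw [hspec, key, key]
    apply hfun
    funext i
    by_cases h : f i = 0
    · simp [hg, h]
    · simp only [hg, if_neg h]
      field_simp
  · rw [hspec, key, key]
    apply hfun
    funext i
    by_cases h : f i = 0
    · simp [hg, h]
    · simp only [hg, if_neg h]
      field_simp
  · rw [hspec, key, hsym]
  · rw [hspec, key, hsym]

lemma pinv_spec {M : Matrix ι ι ℝ} (hM : M.IsHermitian) :
    M * pinv M * M = M ∧ pinv M * M * pinv M = pinv M ∧
    (M * pinv M)ᵀ = M * pinv M ∧ (pinv M * M)ᵀ = pinv M * M := by
  have h := exists_pinv hM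
  rw [pinv, dif_pos h]
  exact h.choose_spec

lemma penrose_uniq {M N N' : Matrix ι ι ℝ}
    (a1 : M * N * M = M) (a2 : N * M * N = N) (a3 : (M * N)ᵀ = M * N) (a4 : (N * M)ᵀ = N * M)
    (b1 : M * N' * M = M) (b2 : N' * M * N' = N') (b3 : (M * N')ᵀ = M * N')
    (b4 : (N' * M)ᵀ = N' * M) : N = N' := by
  have α : (M * N) * (M * N') = M * N' := by rw [← mul_assoc, a1]
  have β : (M * N') * (M * N) = M * N := by rw [← mul_assoc, b1]
  have e1 : M * N = M * N' := by
    have h := congrArg Matrix.transpose α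
    rw [transpose_mul, a3, b3, β] at h
    exact h
  have β' : (N * M) * (N' * M) = N * M := by
    rw [mul_assoc, ← mul_assoc M N' M, b1]
  have γ : (N' * M) * (N * M) = N' * M := by
    rw [mul_assoc, ← mul_assoc M N M, a1]
  have e2 : N * M = N' * M := by
    have h := congrArg Matrix.transpose γ
    rw [transpose_mul, a4, b4, β'] at h
    exact h
  calc N = N * M * N := a2.symm
    _ = N' * M * N := by rw [e2]
    _ = N' * (M * N') := by rw [mul_assoc, e1]
    _ = N' := by rw [← mul_assoc, b2]

lemma trace_nonneg_of_posSemidef {M : Matrix ι ι ℝ} (hM : M.PosSemidef) : 0 ≤ M.trace := by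
  apply Finset.sum_nonneg
  intro i _
  have h := hM.dotProduct_mulVec_nonneg (Pi.single i 1)
  simpa [dotProduct, mulVec, Pi.single_apply, Finset.sum_ite_eq] using h

lemma trace_mul_nonneg_of_posSemidef {A B : Matrix ι ι ℝ} (hA : A.PosSemidef)
    (hB : B.PosSemidef) : 0 ≤ (A * B).trace := by
  have h1 : (A * B).trace = (hA.sqrt_s8 * B * hA.sqrt_s8).trace := by
    conv_lhs => rw [← hA.sqrt_mul_self_s8]
    rw [mul_assoc, trace_mul_comm]
  rw [h1]
  have h2 : (hA.sqrt_s8 * B * hA.sqrt_s8).PosSemidef := by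
    have := hB.mul_mul_conjTranspose_same hA.sqrt_s8
    rwa [hA.posSemidef_sqrt_s8.1] at this
  exact trace_nonneg_of_posSemidef h2

lemma eq_zero_of_trace_transpose_mul_self {α β : Type*} [Fintype α] [Fintype β]
    {A : Matrix α β ℝ} (h : (Aᵀ * A).trace = 0) : A = 0 := by
  have h2 : (∑ k, ∑ l, A l k * A l k) = 0 := by
    simpa [Matrix.trace, Matrix.mul_apply, Matrix.diag] using h
  ext i j
  have h1 : ∀ k ∈ (Finset.univ : Finset β), (0:ℝ) ≤ ∑ l, A l k * A l k :=
    fun k _ => Finset.sum_nonneg fun l _ => mul_self_nonneg _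
  have h3 := (Finset.sum_eq_zero_iff_of_nonneg h1).mp h2 j (Finset.mem_univ j)
  have h4 := (Finset.sum_eq_zero_iff_of_nonneg
    (fun l _ => mul_self_nonneg (A l j))).mp h3 i (Finset.mem_univ i)
  simpa using mul_self_eq_zero.mp h4

set_option maxHeartbeats 1000000 in
/-- With `B ⪰ 0` and `X* = B C ((Cᵀ B C)^{1/2})^†`, the matrix `[[I₃, X*ᵀ],[X*, B]]` is
positive semidefinite, `tr(Cᵀ X*) = tr((Cᵀ B C)^{1/2})`, and `X*` maximizes `tr(Cᵀ X)`
over all `X` with `[[I₃, Xᵀ],[X, B]] ⪰ 0`. -/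
theorem Xstar_optimal {m : ℕ} (hm : 1 ≤ m)
    (B : Matrix (Fin m) (Fin m) ℝ) (hB : B.PosSemidef)
    (C : Matrix (Fin m) (Fin 3) ℝ) :
    (fromBlocks (1 : Matrix (Fin 3) (Fin 3) ℝ) (B * C * pinv (psqrt (Cᵀ * B * C)))ᵀ
        (B * C * pinv (psqrt (Cᵀ * B * C))) B).PosSemidef ∧
    (Cᵀ * (B * C * pinv (psqrt (Cᵀ * B * C)))).trace = (psqrt (Cᵀ * B * C)).trace ∧
    (∀ X : Matrix (Fin m) (Fin 3) ℝ,
      (fromBlocks (1 : Matrix (Fin 3) (Fin 3) ℝ) Xᵀ X B).PosSemidef →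
      (Cᵀ * X).trace ≤ (Cᵀ * (B * C * pinv (psqrt (Cᵀ * B * C)))).trace) := by
  have hS : (Cᵀ * B * C).PosSemidef := by
    have := hB.conjTranspose_mul_mul_same C
    rwa [ct_eq] at this
  obtain ⟨hR, hRR⟩ := psqrt_spec hS
  set R := psqrt (Cᵀ * B * C) with hRdef
  obtain ⟨h1, h2, h3, h4⟩ := pinv_spec hR.1
  set P := pinv R with hPdef
  clear_value R P
  have hRsym : Rᵀ = R := by rw [← ct_eq]; exact hR.1
  -- symmetry of P
  have b1 : R * Pᵀ * R = R := by
    have h := congrArg Matrix.transpose h1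
    rw [transpose_mul, transpose_mul, hRsym, ← Matrix.mul_assoc] at h
    exact h
  have b2 : Pᵀ * R * Pᵀ = Pᵀ := by
    have h := congrArg Matrix.transpose h2
    rw [transpose_mul, transpose_mul, hRsym, ← Matrix.mul_assoc] at h
    exact h
  have key : R * Pᵀ = P * R := by
    calc R * Pᵀ = Rᵀ * Pᵀ := by rw [hRsym]
      _ = (P * R)ᵀ := (transpose_mul P R).symm
      _ = P * R := h4
  have key2 : Pᵀ * R = R * P := by
    calc Pᵀ * R = Pᵀ * Rᵀ := by rw [hRsym]
      _ = (R * P)ᵀ := (transpose_mul R P).symm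
      _ = R * P := h3
  have b3 : (R * Pᵀ)ᵀ = R * Pᵀ := by rw [key]; exact h4
  have b4 : (Pᵀ * R)ᵀ = Pᵀ * R := by rw [key2]; exact h3
  have hPsym : Pᵀ = P := (penrose_uniq h1 h2 h3 h4 b1 b2 b3 b4).symm
  have hPR : P * R = R * P := by
    calc P * R = Pᵀ * R := by rw [hPsym]
      _ = R * P := key2
  have hQQ : (R * P) * (R * P) = R * P := by rw [← Matrix.mul_assoc, h1]
  have hRQ : R * (R * P) = R := by
    have h := congrArg Matrix.transpose h1
    rw [transpose_mul, hRsym, h3] at h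
    exact h
  have hPSP : P * (R * R) * P = R * P := by
    rw [← Matrix.mul_assoc P R R, hPR, h1]
  -- trace claim
  have htr2 : (Cᵀ * (B * C * P)).trace = R.trace := by
    have e : Cᵀ * (B * C * P) = (R * R) * P := by
      rw [hRR]
      simp only [← Matrix.mul_assoc]
    rw [e, Matrix.mul_assoc, trace_mul_comm, h1]
  -- part 1 : positive semidefiniteness of the block matrix
  have hG : hB.sqrt_s8.PosSemidef := hB.posSemidef_sqrt_s8
  have hGG : hB.sqrt_s8 * hB.sqrt_s8 = B := hB.sqrt_mul_self_s8
  have hGsym : hB.sqrt_s8ᵀ = hB.sqrt_s8 := by rw [← ct_eq]; exact hG.1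
  have hAtA : (hB.sqrt_s8 * C * P)ᵀ * (hB.sqrt_s8 * C * P) = R * P := by
    have e : (hB.sqrt_s8 * C * P)ᵀ * (hB.sqrt_s8 * C * P) = P * (Cᵀ * B * C) * P := by
      calc (hB.sqrt_s8 * C * P)ᵀ * (hB.sqrt_s8 * C * P)
          = P * (Cᵀ * (hB.sqrt_s8 * (hB.sqrt_s8 * (C * P)))) := by
            simp only [transpose_mul, hPsym, hGsym, Matrix.mul_assoc]
        _ = P * (Cᵀ * (B * (C * P))) := by rw [← Matrix.mul_assoc hB.sqrt_s8 hB.sqrt_s8, hGG]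
        _ = P * (Cᵀ * B * C) * P := by simp only [Matrix.mul_assoc]
    rw [e, ← hRR, hPSP]
  have hAQ : (hB.sqrt_s8 * C * P) * (R * P) = hB.sqrt_s8 * C * P := by
    calc (hB.sqrt_s8 * C * P) * (R * P) = hB.sqrt_s8 * (C * (P * (R * P))) := by
          simp only [Matrix.mul_assoc]
      _ = hB.sqrt_s8 * (C * P) := by rw [← Matrix.mul_assoc P R P, h2]
      _ = hB.sqrt_s8 * C * P := by rw [← Matrix.mul_assoc]
  have hE : ((hB.sqrt_s8 * C * P) * (hB.sqrt_s8 * C * P)ᵀ) * ((hB.sqrt_s8 * C * P) * (hB.sqrt_s8 * C * P)ᵀ)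
      = (hB.sqrt_s8 * C * P) * (hB.sqrt_s8 * C * P)ᵀ := by
    calc ((hB.sqrt_s8 * C * P) * (hB.sqrt_s8 * C * P)ᵀ) * ((hB.sqrt_s8 * C * P) * (hB.sqrt_s8 * C * P)ᵀ)
        = ((hB.sqrt_s8 * C * P) * ((hB.sqrt_s8 * C * P)ᵀ * (hB.sqrt_s8 * C * P))) * (hB.sqrt_s8 * C * P)ᵀ := by
          simp only [Matrix.mul_assoc]
      _ = ((hB.sqrt_s8 * C * P) * (R * P)) * (hB.sqrt_s8 * C * P)ᵀ := by rw [hAtA]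
      _ = (hB.sqrt_s8 * C * P) * (hB.sqrt_s8 * C * P)ᵀ := by rw [hAQ]
  have hEsym : ((hB.sqrt_s8 * C * P) * (hB.sqrt_s8 * C * P)ᵀ)ᵀ
      = (hB.sqrt_s8 * C * P) * (hB.sqrt_s8 * C * P)ᵀ := by
    rw [transpose_mul, transpose_transpose]
  have hK : (1 - (hB.sqrt_s8 * C * P) * (hB.sqrt_s8 * C * P)ᵀ).PosSemidef := by
    have hKsym : (1 - (hB.sqrt_s8 * C * P) * (hB.sqrt_s8 * C * P)ᵀ)ᵀ
        = 1 - (hB.sqrt_s8 * C * P) * (hB.sqrt_s8 * C * P)ᵀ := by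
      rw [transpose_sub, transpose_one, hEsym]
    have hKK : (1 - (hB.sqrt_s8 * C * P) * (hB.sqrt_s8 * C * P)ᵀ)
        * (1 - (hB.sqrt_s8 * C * P) * (hB.sqrt_s8 * C * P)ᵀ)
        = 1 - (hB.sqrt_s8 * C * P) * (hB.sqrt_s8 * C * P)ᵀ := by
      rw [Matrix.sub_mul, Matrix.one_mul, Matrix.mul_sub, Matrix.mul_one, hE]
      abel
    have h := posSemidef_conjTranspose_mul_self (1 - (hB.sqrt_s8 * C * P) * (hB.sqrt_s8 * C * P)ᵀ)
    rwa [ct_eq, hKsym, hKK] at h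
  have hBX : hB.sqrt_s8 * (1 - (hB.sqrt_s8 * C * P) * (hB.sqrt_s8 * C * P)ᵀ) * hB.sqrt_s8
      = B - (B * C * P) * (B * C * P)ᵀ := by
    rw [Matrix.mul_sub, Matrix.mul_one, Matrix.sub_mul, hGG]
    congr 1
    have e : hB.sqrt_s8 * (hB.sqrt_s8 * C * P) = B * C * P := by
      rw [← Matrix.mul_assoc, ← Matrix.mul_assoc, hGG]
    rw [← e]
    simp only [transpose_mul, hGsym, hPsym, Matrix.mul_assoc]
  have hpos1 : (B - (B * C * P) * (B * C * P)ᵀ).PosSemidef := by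
    have h := hK.mul_mul_conjTranspose_same hB.sqrt_s8
    rwa [ct_eq, hGsym, hBX] at h
  have hct : ∀ (Y : Matrix (Fin m) (Fin 3) ℝ), (Yᵀ)ᴴ = Y := fun Y => by
    rw [ct_eq, transpose_transpose]
  haveI : Invertible (1 : Matrix (Fin 3) (Fin 3) ℝ) := invertibleOne
  have part1 : (fromBlocks (1 : Matrix (Fin 3) (Fin 3) ℝ) (B * C * P)ᵀ (B * C * P) B).PosSemidef := by
    have h' : (B - ((B * C * P)ᵀ)ᴴ * (1 : Matrix (Fin 3) (Fin 3) ℝ)⁻¹ * (B * C * P)ᵀ).PosSemidef := by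
      rw [hct, inv_one, Matrix.mul_one]
      exact hpos1
    have hgoal := (PosDef.fromBlocks₁₁ ((B * C * P)ᵀ) B Matrix.PosDef.one).mpr h'
    rwa [hct] at hgoal
  refine ⟨part1, htr2, ?_⟩
  -- part 3
  intro X hX
  have hX' : (fromBlocks (1 : Matrix (Fin 3) (Fin 3) ℝ) Xᵀ ((Xᵀ)ᴴ) B).PosSemidef := by
    rwa [hct]
  have hH := (PosDef.fromBlocks₁₁ (Xᵀ) B Matrix.PosDef.one).mp hX'
  rw [hct, inv_one, Matrix.mul_one] at hH
  -- hH : (B - X * Xᵀ).PosSemidef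
  have hQS : (R * P) * (Cᵀ * B * C) = Cᵀ * B * C := by
    rw [← hRR, ← Matrix.mul_assoc, h1]
  have hSsym : (Cᵀ * B * C)ᵀ = Cᵀ * B * C := by rw [← ct_eq]; exact hS.1
  have h1Q : (1 - R * P) * (Cᵀ * B * C) = 0 := by
    rw [Matrix.sub_mul, Matrix.one_mul, hQS, sub_self]
  have h1Qsym : (1 - R * P)ᵀ = 1 - R * P := by rw [transpose_sub, transpose_one, h3]
  have hTBT : (C * (1 - R * P))ᵀ * B * (C * (1 - R * P)) = 0 := by
    calc (C * (1 - R * P))ᵀ * B * (C * (1 - R * P))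
        = ((1 - R * P) * (Cᵀ * B * C)) * (1 - R * P) := by
          rw [transpose_mul, h1Qsym]
          simp only [Matrix.mul_assoc]
      _ = 0 := by rw [h1Q, Matrix.zero_mul]
  have hEpsd : ((C * (1 - R * P))ᵀ * (B - X * Xᵀ) * (C * (1 - R * P))).PosSemidef := by
    have := hH.conjTranspose_mul_mul_same (C * (1 - R * P))
    rwa [ct_eq] at this
  have hEeq : (C * (1 - R * P))ᵀ * (B - X * Xᵀ) * (C * (1 - R * P))
      = -((Xᵀ * (C * (1 - R * P)))ᵀ * (Xᵀ * (C * (1 - R * P)))) := by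
    calc (C * (1 - R * P))ᵀ * (B - X * Xᵀ) * (C * (1 - R * P))
        = (C * (1 - R * P))ᵀ * B * (C * (1 - R * P))
          - (C * (1 - R * P))ᵀ * (X * Xᵀ) * (C * (1 - R * P)) := by
          rw [Matrix.mul_sub, Matrix.sub_mul]
      _ = -((C * (1 - R * P))ᵀ * (X * Xᵀ) * (C * (1 - R * P))) := by rw [hTBT, zero_sub]
      _ = -((Xᵀ * (C * (1 - R * P)))ᵀ * (Xᵀ * (C * (1 - R * P)))) := by
          congr 1
          rw [transpose_mul (Xᵀ) (C * (1 - R * P)), transpose_transpose]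
          simp only [Matrix.mul_assoc]
  have hA2 : Xᵀ * (C * (1 - R * P)) = 0 := by
    apply eq_zero_of_trace_transpose_mul_self
    have t1 : 0 ≤ ((C * (1 - R * P))ᵀ * (B - X * Xᵀ) * (C * (1 - R * P))).trace :=
      trace_nonneg_of_posSemidef hEpsd
    rw [hEeq, trace_neg] at t1
    have t2 : 0 ≤ ((Xᵀ * (C * (1 - R * P)))ᵀ * (Xᵀ * (C * (1 - R * P)))).trace := by
      apply trace_nonneg_of_posSemidef
      have := posSemidef_conjTranspose_mul_self (Xᵀ * (C * (1 - R * P)))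
      rwa [ct_eq] at this
    linarith
  have hQCX : Cᵀ * X = (R * P) * (Cᵀ * X) := by
    have h := congrArg Matrix.transpose hA2
    rw [transpose_mul, transpose_mul, transpose_transpose, transpose_zero, h1Qsym] at h
    rw [Matrix.mul_assoc, Matrix.sub_mul, Matrix.one_mul, sub_eq_zero] at h
    exact h
  -- the dual certificate
  have hNpsd : ((R * P - P * (Cᵀ * X)) * (R * P - P * (Cᵀ * X))ᵀ
      + (C * P)ᵀ * (B - X * Xᵀ) * (C * P)).PosSemidef := by
    apply PosSemidef.add
    · have := posSemidef_self_mul_conjTranspose (R * P - P * (Cᵀ * X))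
      rwa [ct_eq] at this
    · have := hH.conjTranspose_mul_mul_same (C * P)
      rwa [ct_eq] at this
  have hNe : (R * P - P * (Cᵀ * X)) * (R * P - P * (Cᵀ * X))ᵀ
      + (C * P)ᵀ * (B - X * Xᵀ) * (C * P)
      = (R * P) + (R * P) - (R * P) * (Xᵀ * (C * P)) - (P * (Cᵀ * X)) * (R * P) := by
    have e1 : (R * P - P * (Cᵀ * X))ᵀ = R * P - Xᵀ * (C * P) := by
      rw [transpose_sub, h3, transpose_mul, transpose_mul, transpose_transpose, hPsym,
        Matrix.mul_assoc]
    rw [e1]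
    have q4 : (C * P)ᵀ * B * (C * P) = R * P := by
      have e : (C * P)ᵀ * B * (C * P) = P * (Cᵀ * B * C) * P := by
        rw [transpose_mul, hPsym]
        simp only [Matrix.mul_assoc]
      rw [e, ← hRR, hPSP]
    have q5 : (C * P)ᵀ * (X * Xᵀ) * (C * P) = (P * (Cᵀ * X)) * (Xᵀ * (C * P)) := by
      rw [transpose_mul, hPsym]
      simp only [Matrix.mul_assoc]
    calc (R * P - P * (Cᵀ * X)) * (R * P - Xᵀ * (C * P))
        + (C * P)ᵀ * (B - X * Xᵀ) * (C * P)
        = ((R * P) * (R * P) - (R * P) * (Xᵀ * (C * P)) - (P * (Cᵀ * X)) * (R * P)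
            + (P * (Cᵀ * X)) * (Xᵀ * (C * P)))
          + ((C * P)ᵀ * B * (C * P) - (C * P)ᵀ * (X * Xᵀ) * (C * P)) := by
          simp only [Matrix.mul_sub, Matrix.sub_mul]
          abel
      _ = (R * P) + (R * P) - (R * P) * (Xᵀ * (C * P)) - (P * (Cᵀ * X)) * (R * P) := by
          rw [hQQ, q4, q5]
          abel
  -- trace computations
  have ttrans : ((R * P) * (Xᵀ * C)).trace = ((R * P) * (Cᵀ * X)).trace := by
    have e : ((R * P) * (Xᵀ * C))ᵀ = (Cᵀ * X) * (R * P) := by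
      rw [transpose_mul, transpose_mul, transpose_transpose, h3]
    rw [← trace_transpose ((R * P) * (Xᵀ * C)), e, trace_mul_comm]
  have tA : (R * ((R * P) * (Xᵀ * (C * P)))).trace = ((R * P) * (Cᵀ * X)).trace := by
    rw [← Matrix.mul_assoc, hRQ, trace_mul_comm]
    have e : (Xᵀ * (C * P)) * R = Xᵀ * (C * (P * R)) := by simp only [Matrix.mul_assoc]
    rw [e, hPR]
    have e2 : Xᵀ * (C * (R * P)) = (Xᵀ * C) * (R * P) := by simp only [Matrix.mul_assoc]
    rw [e2, trace_mul_comm, ttrans]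
  have tB : (R * ((P * (Cᵀ * X)) * (R * P))).trace = ((R * P) * (Cᵀ * X)).trace := by
    have e : R * ((P * (Cᵀ * X)) * (R * P)) = ((R * P) * (Cᵀ * X)) * (R * P) := by
      simp only [Matrix.mul_assoc]
    rw [e, trace_mul_comm, ← Matrix.mul_assoc, hQQ]
  have tQ : (R * (R * P)).trace = R.trace := by rw [hRQ]
  have hfinal : 0 ≤ ((R : Matrix (Fin 3) (Fin 3) ℝ)
      * ((R * P) + (R * P) - (R * P) * (Xᵀ * (C * P)) - (P * (Cᵀ * X)) * (R * P))).trace := by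
    rw [← hNe]
    exact trace_mul_nonneg_of_posSemidef hR hNpsd
  rw [Matrix.mul_sub, Matrix.mul_sub, Matrix.mul_add, trace_sub, trace_sub, trace_add,
    tQ, tA, tB] at hfinal
  -- hfinal : 0 ≤ R.trace + R.trace - t - t
  have hCX : (Cᵀ * X).trace = ((R * P) * (Cᵀ * X)).trace := by rw [← hQCX]
  rw [htr2, hCX]
  linarith
end

section
/- Let Y ∈ ℝ^{3n×3n} be positive semidefinite with rank Y ≤ 3 and with every diagonal 3×3 block Y_{i,i} = I₃ for i = 1,…,n. Then there exists Q ∈ ℝ^{3n×3}, the column-stacking of 3×3 blocks Q₁,…,Qₙ, such that Y = Q Qᵀ and each Q_i is orthogonal (Q_i Q_iᵀ = I₃). -/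
open Matrix

/-- Column-stacking `[Q₁ᵀ ⋯ Qₙᵀ]ᵀ ∈ ℝ^{3n×3}` of 3×3 matrices. -/
def stack {n : ℕ} (Qs : Fin n → Matrix (Fin 3) (Fin 3) ℝ) :
    Matrix (Fin n × Fin 3) (Fin 3) ℝ :=
  fun p b => Qs p.1 p.2 b

/-- The `(i,j)`-th 3×3 block of a `3n×3n` matrix. -/
def blk {n : ℕ} (A : Matrix (Fin n × Fin 3) (Fin n × Fin 3) ℝ) (i j : Fin n) :
    Matrix (Fin 3) (Fin 3) ℝ :=
  fun a b => A (i, a) (j, b)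

/-- A positive semidefinite `Y ∈ ℝ^{3n×3n}` of rank at most 3 whose diagonal 3×3 blocks
all equal `I₃` factorizes as `Y = Q Qᵀ` where `Q` is the column-stacking of orthogonal
3×3 matrices `Q₁,…,Qₙ`. -/
theorem rank3_factorization {n : ℕ}
    (Y : Matrix (Fin n × Fin 3) (Fin n × Fin 3) ℝ)
    (hY : Y.PosSemidef) (hrank : Y.rank ≤ 3)
    (hdiag : ∀ i : Fin n, blk Y i i = 1) :
    ∃ Qs : Fin n → Matrix (Fin 3) (Fin 3) ℝ,
      Y = stack Qs * (stack Qs)ᵀ ∧ ∀ i, Qs i * (Qs i)ᵀ = 1 := by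
  classical
  have m := hY.1
  set μ := m.eigenvalues with hμ
  set U : Matrix (Fin n × Fin 3) (Fin n × Fin 3) ℝ :=
    (m.eigenvectorUnitary : Matrix (Fin n × Fin 3) (Fin n × Fin 3) ℝ) with hU
  have hcard : Fintype.card {k // μ k ≠ 0} ≤ Fintype.card (Fin 3) := by
    rw [← m.rank_eq_card_non_zero_eigs]
    simpa using hrank
  obtain ⟨e⟩ := Function.Embedding.nonempty_of_card_le hcard
  -- the "thin" factor
  set W : Matrix (Fin n × Fin 3) {k // μ k ≠ 0} ℝ :=
    fun p k => Real.sqrt (μ k) * U p k with hW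
  set E : Matrix {k // μ k ≠ 0} (Fin 3) ℝ :=
    fun k c => if e k = c then 1 else 0 with hE
  set Q : Matrix (Fin n × Fin 3) (Fin 3) ℝ := W * E with hQdef
  have hEE : E * Eᵀ = 1 := by
    ext k l
    show ∑ j, E k j * E l j = (1 : Matrix {k // μ k ≠ 0} {k // μ k ≠ 0} ℝ) k l
    simp only [mul_apply, transpose_apply, hE, ite_mul, one_mul, zero_mul, mul_ite,
      mul_one, mul_zero]
    rw [Finset.sum_ite_eq Finset.univ (e l)]
    simp [one_apply, e.injective.eq_iff, eq_comm]
  have hWW : W * Wᵀ = Y := by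
    ext p q
    have lhs_eq : (W * Wᵀ) p q = ∑ k : {k // μ k ≠ 0}, μ (k : Fin n × Fin 3) * U p k * U q k := by
      simp only [mul_apply, transpose_apply, hW]
      refine Finset.sum_congr rfl fun k _ => ?_
      have h : Real.sqrt (μ k) * Real.sqrt (μ k) = μ (k : Fin n × Fin 3) :=
        Real.mul_self_sqrt (hY.eigenvalues_nonneg (k : Fin n × Fin 3))
      calc Real.sqrt (μ k) * U p k * (Real.sqrt (μ k) * U q k)
          = Real.sqrt (μ k) * Real.sqrt (μ k) * (U p k * U q k) := by ring
        _ = μ (k : Fin n × Fin 3) * U p k * U q k := by rw [h]; ring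
    have rhs_eq : Y p q = ∑ k, μ k * U p k * U q k := by
      conv_lhs => rw [m.spectral_theorem, Unitary.conjStarAlgAut_apply]
      simp only [mul_apply, diagonal_apply, star_apply, star_trivial, ite_mul, zero_mul,
        mul_ite, mul_zero, Function.comp_apply, RCLike.ofReal_real_eq_id, id_eq,
        Finset.sum_ite_eq, Finset.sum_ite_eq', Finset.mem_univ, if_true]
      exact Finset.sum_congr rfl fun k _ => by ring
    have hsub : ∑ k ∈ Finset.univ.filter (fun k => μ k ≠ 0), μ k * U p k * U q k
        = ∑ k : {k // μ k ≠ 0}, μ (k : Fin n × Fin 3) * U p k * U q k :=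
      Finset.sum_subtype _ (by simp) _
    rw [lhs_eq, rhs_eq, ← hsub, Finset.sum_filter_of_ne]
    intro k _ hne h0
    exact hne (by rw [h0]; ring)
  have hQQ : Q * Qᵀ = Y := by
    rw [hQdef, transpose_mul, Matrix.mul_assoc, ← Matrix.mul_assoc E, hEE, Matrix.one_mul, hWW]
  refine ⟨fun i => fun a b => Q (i, a) b, ?_, ?_⟩
  · have hs : stack (fun i => fun a b => Q (i, a) b) = Q := by
      funext p b
      simp [stack]
    rw [hs, hQQ]
  · intro i
    ext a b
    have : (Q * Qᵀ) (i, a) (i, b) = Y (i, a) (i, b) := by rw [hQQ]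
    show ∑ j, Q (i, a) j * Q (i, b) j = (1 : Matrix (Fin 3) (Fin 3) ℝ) a b
    simp only [mul_apply, transpose_apply] at this ⊢
    rw [this]
    have := congrFun (congrFun (hdiag i) a) b
    simpa [blk] using this
end
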